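/- Let B be a topological abelian group that is an extension 0 → T → B → ℤ̂^r → 0 with T finite, and let Λ be a set of primes. Then B_Λ := lim_{m ∈ N(Λ)} B/mB is topologically finitely generated, and its torsion subgroup (B_Λ)_tor is finite; in particular there exists N ∈ N(Λ) with N·(B_Λ)_tor = 0. -/

import Mathlib

/-- `NLam L m` : `m` is a positive integer all of whose prime divisors lie in `L`. -/
def NLam (L : Set ℕ) (m : ℕ) : Prop := 0 < m ∧ ∀ p : ℕ, p.Prime → p ∣ m → p ∈ L

/-- Multiplication by `m` as an additive homomorphism. -/
def smulHom (B : Type*) [AddCommGroup B] (m : ℕ) : B →+ B where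
  toFun := fun x => m • x
  map_zero' := smul_zero m
  map_add' := fun a b => smul_add m a b

/-- The subgroup `mB` of `B`. -/
def smulSub (B : Type*) [AddCommGroup B] (m : ℕ) : AddSubgroup B := (smulHom B m).range

lemma smulSub_le (B : Type*) [AddCommGroup B] {m m' : ℕ} (h : m' ∣ m) :
    smulSub B m ≤ smulSub B m' := by
  rintro x ⟨y, rfl⟩
  obtain ⟨c, rfl⟩ := h
  exact ⟨c • y, by simp only [smulHom, AddMonoidHom.coe_mk, ZeroHom.coe_mk, mul_nsmul]; rw [smul_comm]⟩

/-- The transition map `B/mB → B/m'B` for `m' ∣ m`. -/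
def transMap (B : Type*) [AddCommGroup B] {m m' : ℕ} (h : m' ∣ m) :
    (B ⧸ smulSub B m) →+ (B ⧸ smulSub B m') :=
  QuotientAddGroup.map _ _ (AddMonoidHom.id B) (fun x hx => smulSub_le B h hx)

/-- `B_Λ = lim_{m ∈ N(Λ)} B/mB`, as the subgroup of compatible families. -/
def BLam (B : Type*) [AddCommGroup B] (L : Set ℕ) :
    AddSubgroup (∀ m : {m : ℕ // NLam L m}, B ⧸ smulSub B m.1) where
  carrier := {f | ∀ (m m' : {m : ℕ // NLam L m}) (h : m'.1 ∣ m.1),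
    transMap B h (f m) = f m'}
  zero_mem' := by intro m m' h; simp
  add_mem' := by intro a b ha hb m m' h; simp [map_add, ha m m' h, hb m m' h]
  neg_mem' := by intro a ha m m' h; simp [map_neg, ha m m' h]

/-- `ℤ̂`, the profinite completion of `ℤ`: compatible families in `Π n, ℤ/nℤ`. -/
def ZHat : AddSubgroup (∀ n : ℕ+, ZMod n) where
  carrier := {f | ∀ (m n : ℕ+) (h : (m : ℕ) ∣ (n : ℕ)),
    ZMod.castHom h (ZMod m) (f n) = f m}
  zero_mem' := by intro m n h; simp
  add_mem' := by intro a b ha hb m n h; simp [map_add, ha m n h, hb m n h]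
  neg_mem' := by intro a ha m n h; simp [map_neg, ha m n h]

/-! ### Auxiliary lemmas -/

lemma NLam.one' (L : Set ℕ) : NLam L 1 :=
  ⟨one_pos, fun p hp hd => absurd (Nat.le_of_dvd one_pos hd) (by have := hp.two_le; omega)⟩

lemma NLam.mul' {L : Set ℕ} {a b : ℕ} (ha : NLam L a) (hb : NLam L b) : NLam L (a * b) :=
  ⟨Nat.mul_pos ha.1 hb.1, fun p hp hd => by
    rcases (Nat.Prime.dvd_mul hp).1 hd with h | h
    · exact ha.2 p hp h
    · exact hb.2 p hp h⟩

lemma nlam_split (L : Set ℕ) : ∀ n : ℕ, 0 < n → ∃ a b : ℕ, 0 < a ∧ 0 < b ∧ n = a * b ∧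
    (∀ p : ℕ, p.Prime → p ∣ a → p ∈ L) ∧ (∀ p : ℕ, p.Prime → p ∣ b → p ∉ L) := by
  intro n
  induction n using Nat.strong_induction_on with
  | _ n ih =>
    intro hn
    rcases eq_or_lt_of_le (Nat.succ_le_of_lt hn) with h1 | h1
    · refine ⟨1, 1, one_pos, one_pos, by omega, ?_, ?_⟩ <;>
        exact fun p hp hd => absurd (Nat.le_of_dvd one_pos hd) (by have := hp.two_le; omega)
    · have hp : n.minFac.Prime := Nat.minFac_prime (by omega)
      obtain ⟨m, hm⟩ := n.minFac_dvd
      have hmpos : 0 < m := Nat.pos_of_ne_zero (by rintro rfl; simp at hm; omega)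
      have hmlt : m < n := by
        have h2 := hp.two_le
        nlinarith [hm]
      obtain ⟨a, b, hapos, hbpos, hab, haL, hbL⟩ := ih m hmlt hmpos
      by_cases hmem : n.minFac ∈ L
      · refine ⟨n.minFac * a, b, Nat.mul_pos hp.pos hapos, hbpos, by rw [mul_assoc, ← hab, ← hm], ?_, hbL⟩
        intro p hpp hdvd
        rcases (Nat.Prime.dvd_mul hpp).1 hdvd with h | h
        · rwa [(Nat.prime_dvd_prime_iff_eq hpp hp).1 h]
        · exact haL p hpp h
      · refine ⟨a, n.minFac * b, hapos, Nat.mul_pos hp.pos hbpos, by rw [mul_comm a, mul_assoc, mul_comm b, ← hab, ← hm], haL, ?_⟩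
        intro p hpp hdvd
        rcases (Nat.Prime.dvd_mul hpp).1 hdvd with h | h
        · rwa [(Nat.prime_dvd_prime_iff_eq hpp hp).1 h]
        · exact hbL p hpp h

lemma coprime_of_disjoint_primes {L : Set ℕ} {m u : ℕ} (hmpos : 0 < m)
    (hm : ∀ p : ℕ, p.Prime → p ∣ m → p ∈ L) (hu : ∀ p : ℕ, p.Prime → p ∣ u → p ∉ L) :
    Nat.Coprime m u := by
  by_contra h
  have hg : 1 < Nat.gcd m u := by
    have := Nat.gcd_pos_of_pos_left u hmpos
    rcases Nat.lt_or_ge 1 (Nat.gcd m u) with h' | h'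
    · exact h'
    · exact absurd (by omega : Nat.gcd m u = 1) h
  have hpf : (Nat.gcd m u).minFac.Prime := Nat.minFac_prime (by omega)
  have h1 : (Nat.gcd m u).minFac ∣ m := dvd_trans (Nat.minFac_dvd _) (Nat.gcd_dvd_left _ _)
  have h2 : (Nat.gcd m u).minFac ∣ u := dvd_trans (Nat.minFac_dvd _) (Nat.gcd_dvd_right _ _)
  exact hu _ hpf h2 (hm _ hpf h1)

lemma eq_zero_of_coprime_smuls {Q : Type*} [AddCommGroup Q] (x : Q) {m u : ℕ}
    (h : Nat.Coprime m u) (hm : m • x = 0) (hu : u • x = 0) : x = 0 := by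
  have h1 : ((1 : ℤ)) • x = 0 := by
    have := Nat.gcd_eq_gcd_ab m u
    rw [h] at this
    rw [show (1 : ℤ) = (m : ℤ) * Nat.gcdA m u + (u : ℤ) * Nat.gcdB m u from by exact_mod_cast this]
    rw [add_smul, mul_comm (m:ℤ), mul_comm (u:ℤ), mul_smul, mul_smul,
      natCast_zsmul, natCast_zsmul, hm, hu, smul_zero, smul_zero, add_zero]
  simpa using h1

lemma zhat_mem {y : ∀ n : ℕ+, ZMod n} (hy : y ∈ ZHat) (m n : ℕ+) (h : (m:ℕ) ∣ (n:ℕ)) :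
    ((y n).val : ZMod m) = y m := by
  have := hy m n h
  rwa [ZMod.castHom_apply, ← ZMod.natCast_val] at this

lemma cast_of_torsion {k n : ℕ+} (x : ZMod (↑(k*n) : ℕ)) (h : (n : ℕ) • x = 0) :
    ((x.val : ℕ) : ZMod k) = 0 := by
  haveI : NeZero ((k*n : ℕ+) : ℕ) := ⟨(k*n).pos.ne'⟩
  rw [nsmul_eq_mul] at h
  have h2 : (((n:ℕ) * x.val : ℕ) : ZMod (↑(k*n):ℕ)) = 0 := by
    rw [Nat.cast_mul, ZMod.natCast_zmod_val]
    exact h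
  rw [ZMod.natCast_eq_zero_iff] at h2
  obtain ⟨c, hc⟩ := h2
  have hc' : (n:ℕ) * x.val = (n:ℕ) * ((k:ℕ) * c) := by push_cast at hc; exact hc.trans (by ring)
  have : x.val = (k:ℕ) * c := Nat.eq_of_mul_eq_mul_left n.pos hc'
  rw [ZMod.natCast_eq_zero_iff]
  exact ⟨c, this⟩

lemma zhat_torsionfree (y : ZHat) (n : ℕ) (hn : 0 < n) (h : n • y = 0) : y = 0 := by
  set np : ℕ+ := ⟨n, hn⟩ with hnp
  ext k
  show y.1 k = 0
  have hcomp := y.2 k (k * np) (by push_cast; exact Dvd.intro _ rfl)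
  have hx : (np : ℕ) • (y.1 (k * np)) = 0 := by
    have := congrArg (fun z : ZHat => z.1 (k * np)) h
    simp at this; exact this
  have := cast_of_torsion (k := k) (n := np) (y.1 (k*np)) hx
  rw [← hcomp, ZMod.castHom_apply, ← ZMod.natCast_val]
  exact this

lemma zhat_div {y : ∀ n : ℕ+, ZMod n} (hy : y ∈ ZHat) (M : ℕ+) (h0 : y M = 0) :
    ∃ w ∈ ZHat, (M : ℕ) • w = y := by
  have hMdvd : ∀ n : ℕ+, (M : ℕ) ∣ (y (n * M)).val := by
    intro n
    have := zhat_mem hy M (n * M) (by push_cast; exact dvd_mul_left _ _)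
    rw [h0, ZMod.natCast_eq_zero_iff] at this
    exact this
  refine ⟨fun n => (((y (n * M)).val / (M : ℕ) : ℕ) : ZMod n), ?_, ?_⟩
  · intro k n hk
    simp only [map_natCast]
    rw [ZMod.natCast_eq_natCast_iff]
    have hmod : (y (n * M)).val ≡ (y (k * M)).val [MOD (M:ℕ) * (k:ℕ)] := by
      have h1 := zhat_mem hy (k * M) (n * M)
        (by push_cast; exact mul_dvd_mul_right hk _)
      haveI : NeZero ((k*M : ℕ+) : ℕ) := ⟨(k*M).pos.ne'⟩
      have h2 : (((y (k*M)).val : ℕ) : ZMod ((k*M : ℕ+) : ℕ)) = y (k*M) := by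
        rw [ZMod.natCast_val, ZMod.cast_id]
      have h3 := (ZMod.natCast_eq_natCast_iff _ _ _).1 (h1.trans h2.symm)
      have hkM : ((k*M : ℕ+) : ℕ) = (M:ℕ) * (k:ℕ) := by push_cast; ring
      rw [← hkM]
      exact h3
    have hmod2 : (M:ℕ) * ((y (n * M)).val / (M:ℕ)) ≡ (M:ℕ) * ((y (k * M)).val / (M:ℕ))
        [MOD (M:ℕ) * (k:ℕ)] := by
      rwa [Nat.mul_div_cancel' (hMdvd n), Nat.mul_div_cancel' (hMdvd k)]
    exact Nat.ModEq.mul_left_cancel' M.pos.ne' hmod2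
  · funext n
    show (M:ℕ) • ((((y (n * M)).val / (M : ℕ) : ℕ)) : ZMod n) = y n
    rw [nsmul_eq_mul, ← Nat.cast_mul, Nat.mul_div_cancel' (hMdvd n)]
    exact zhat_mem hy n (n * M) (by push_cast; exact dvd_mul_right _ _)

lemma smulSub_mem {B : Type*} [AddCommGroup B] (m : ℕ) (x : B) : m • x ∈ smulSub B m := ⟨x, rfl⟩

lemma transMap_mk {B : Type*} [AddCommGroup B] {m m' : ℕ} (h : m' ∣ m) (x : B) :
    transMap B h (QuotientAddGroup.mk x) = QuotientAddGroup.mk x := by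
  unfold transMap
  rfl

/-- Let `B` be a topological abelian group which is an extension
`0 → T → B → ℤ̂^r → 0` with `T` finite, and `Λ` a set of primes.  Then
`B_Λ = lim_{m ∈ N(Λ)} B/mB` is topologically finitely generated, its torsion subgroup
is finite, and in particular some `N ∈ N(Λ)` annihilates the torsion of `B_Λ`. -/
theorem BLam_top_fg_and_torsion_finite
    {B : Type*} [AddCommGroup B] [TopologicalSpace B] [IsTopologicalAddGroup B]
    {T : Type*} [AddCommGroup T] [Finite T] (r : ℕ)
    (ι : T →+ B) (π : B →+ (Fin r → ZHat))
    (hι : Function.Injective ι) (hπ : Function.Surjective π)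
    (hex : π.ker = ι.range)
    (L : Set ℕ) (hL : ∀ p ∈ L, p.Prime) :
    (∃ Sgen : Finset (BLam B L),
      Dense ((AddSubgroup.closure (Sgen : Set (BLam B L)) : Set (BLam B L)))) ∧
    {b : BLam B L | ∃ n : ℕ, 0 < n ∧ n • b = 0}.Finite ∧
    (∃ N : ℕ, NLam L N ∧ ∀ b : BLam B L, (∃ n : ℕ, 0 < n ∧ n • b = 0) → N • b = 0) := by
  classical
  haveI : Fintype T := Fintype.ofFinite T
  -- torsion elements of B lie in the image of T
  have hTors : ∀ x : B, ∀ k : ℕ, 0 < k → k • x = 0 → x ∈ ι.range := by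
    intro x k hk hkx
    rw [← hex, AddMonoidHom.mem_ker]
    funext i
    have h1 : k • π x = 0 := by rw [← map_nsmul, hkx, map_zero]
    have h2 : k • (π x i) = 0 := by
      have := congrFun h1 i
      simpa only [Pi.smul_apply, Pi.zero_apply] using this
    exact zhat_torsionfree (π x i) k hk h2
  -- the exponent bound
  set e : ℕ := Fintype.card T with he_def
  have he : 0 < e := Fintype.card_pos
  have heT : ∀ t : T, e • t = 0 := fun t => card_nsmul_eq_zero
  obtain ⟨N, e', hNpos, he'pos, heq, hNL, hne'⟩ := nlam_split L e he
  -- components of smul: (n • b).1 m = n • (b.1 m)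
  have hsmul1 : ∀ (n : ℕ) (b : BLam B L) (m : {m : ℕ // NLam L m}),
      (↑(n • b) : ∀ m : {m : ℕ // NLam L m}, B ⧸ smulSub B m.1) m = n • (b.1 m) := by
    intro n b m
    rfl
  -- Part 3 : N kills all torsion
  have hkill : ∀ b : BLam B L, (∃ n : ℕ, 0 < n ∧ n • b = 0) → N • b = 0 := by
    rintro b ⟨n, hn, hnb⟩
    obtain ⟨nA, nB, hnApos, hnBpos, hnab, hnAL, hnBL⟩ := nlam_split L n hn
    apply Subtype.ext
    funext m
    rw [hsmul1 N b m]
    -- work one level up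
    set m2 : {m : ℕ // NLam L m} := ⟨m.1 * nA, m.2.mul' ⟨hnApos, hnAL⟩⟩ with hm2
    obtain ⟨β, hβ⟩ := QuotientAddGroup.mk_surjective (b.1 m2)
    have hbm : b.1 m = QuotientAddGroup.mk β := by
      rw [← b.2 m2 m ⟨nA, rfl⟩, ← hβ, transMap_mk]
    have hnβ : n • β ∈ smulSub B (m.1 * nA) := by
      rw [← QuotientAddGroup.eq_zero_iff]
      have : ((n • b : BLam B L) : ∀ m : {m : ℕ // NLam L m}, B ⧸ smulSub B m.1) m2 = 0 := by
        rw [hnb]; rfl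
      rw [hsmul1 n b m2, ← hβ] at this
      exact this
    obtain ⟨γ, hγ⟩ := hnβ
    have hγ' : (m.1 * nA) • γ = n • β := hγ
    have hx0 : nA • (nB • β - m.1 • γ) = 0 := by
      have h1 : nA • (nB • β) = n • β := by
        rw [← mul_nsmul β nB nA, mul_comm nB nA, ← hnab]
      have h2 : nA • (m.1 • γ) = n • β := by
        rw [← mul_nsmul γ m.1 nA]
        exact hγ'
      rw [smul_sub, h1, h2, sub_self]
    obtain ⟨t, ht⟩ := hTors _ nA hnApos hx0
    -- so nB • β = m.1 • γ + ι t
    have hkey : nB • β = m.1 • γ + ι t := by rw [ht]; abel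
    -- now show N • mk β = 0 in B / m.1 B
    have hgoal : (N : ℕ) • (QuotientAddGroup.mk β : B ⧸ smulSub B m.1) = 0 := by
      apply eq_zero_of_coprime_smuls _
        (coprime_of_disjoint_primes m.2.1 m.2.2
          (u := nB * e') (fun p hp hd => by
            rcases (Nat.Prime.dvd_mul hp).1 hd with h | h
            · exact hnBL p hp h
            · exact hne' p hp h))
        (m := m.1)
      · -- m.1 • (N • mk β) = 0
        rw [← QuotientAddGroup.mk_nsmul, ← QuotientAddGroup.mk_nsmul, QuotientAddGroup.eq_zero_iff]
        exact smulSub_mem m.1 (N • β)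
      · -- (nB * e') • (N • mk β) = 0
        rw [← QuotientAddGroup.mk_nsmul, ← QuotientAddGroup.mk_nsmul, QuotientAddGroup.eq_zero_iff]
        have hfl : (nB * e') • (N • β) = (e' * N) • (nB • β) := by
          rw [← mul_nsmul β N (nB * e'), ← mul_nsmul β nB (e' * N),
            show N * (nB * e') = nB * (e' * N) from by ring]
        have htz : (e' * N) • t = 0 := by
          rw [mul_comm e' N, ← heq]
          exact heT t
        have h5 : (e' * N) • (nB • β) = m.1 • ((e' * N) • γ) := by
          rw [hkey, smul_add, smul_comm (e' * N) m.1 γ, ← map_nsmul ι ((e' * N)) t,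
            htz, map_zero, add_zero]
        rw [hfl, h5]
        exact smulSub_mem m.1 _
    rw [hbm, ← QuotientAddGroup.mk_nsmul]
    rw [← QuotientAddGroup.mk_nsmul] at hgoal
    exact hgoal
  have hNlam : NLam L N := ⟨hNpos, hNL⟩
  -- every torsion element has all components in the image of ι(T)
  have hrep : ∀ b : BLam B L, (∃ n : ℕ, 0 < n ∧ n • b = 0) →
      ∀ m : {m : ℕ // NLam L m}, ∃ t : T, b.1 m = QuotientAddGroup.mk (ι t) := by
    intro b hb m
    have hNb := hkill b hb
    set m2 : {m : ℕ // NLam L m} := ⟨m.1 * N, m.2.mul' hNlam⟩ with hm2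
    obtain ⟨β, hβ⟩ := QuotientAddGroup.mk_surjective (b.1 m2)
    have hbm : b.1 m = QuotientAddGroup.mk β := by
      rw [← b.2 m2 m ⟨N, rfl⟩, ← hβ, transMap_mk]
    have hNβ : N • β ∈ smulSub B (m.1 * N) := by
      rw [← QuotientAddGroup.eq_zero_iff]
      have h0 : (↑(N • b) : ∀ m : {m : ℕ // NLam L m}, B ⧸ smulSub B m.1) m2 = 0 := by
        rw [hNb]; rfl
      rw [hsmul1 N b m2, ← hβ] at h0
      rw [QuotientAddGroup.mk_nsmul]
      exact h0
    obtain ⟨γ, hγ⟩ := hNβ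
    have hγ' : (m.1 * N) • γ = N • β := hγ
    have hx0 : N • (β - m.1 • γ) = 0 := by
      rw [smul_sub, ← mul_nsmul γ m.1 N, hγ', sub_self]
    obtain ⟨t, ht⟩ := hTors _ N hNpos hx0
    refine ⟨t, ?_⟩
    rw [hbm, ht, QuotientAddGroup.eq_iff_sub_mem,
      show β - (β - m.1 • γ) = m.1 • γ from by abel]
    exact smulSub_mem m.1 γ
  have hfin : {b : BLam B L | ∃ n : ℕ, 0 < n ∧ n • b = 0}.Finite := by
    by_contra hinf
    have hdiff : ∀ b b' : BLam B L, ∃ m : {m : ℕ // NLam L m},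
        b ≠ b' → b.1 m ≠ b'.1 m := by
      intro b b'
      by_cases hne : b = b'
      · exact ⟨⟨1, NLam.one' L⟩, fun h => absurd hne h⟩
      · have : ∃ m, b.1 m ≠ b'.1 m := by
          by_contra hc
          push_neg at hc
          exact hne (Subtype.ext (funext hc))
        obtain ⟨m, hm⟩ := this
        exact ⟨m, fun _ => hm⟩
    choose dm hdm using hdiff
    obtain ⟨S, hSsub, hScard⟩ :=
      Set.Infinite.exists_subset_card_eq hinf (Fintype.card T + 1)
    set M : ℕ := ∏ q ∈ S ×ˢ S, (dm q.1 q.2).1 with hMdef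
    have hM : NLam L M :=
      Finset.prod_induction _ (NLam L) (fun a b ha hb => ha.mul' hb) (NLam.one' L)
        (fun q _ => (dm q.1 q.2).2)
    set Mi : {m : ℕ // NLam L m} := ⟨M, hM⟩ with hMi
    set Tset : Finset (B ⧸ smulSub B Mi.1) :=
      Finset.univ.image (fun t : T => QuotientAddGroup.mk (ι t)) with hTset
    have hmaps : ∀ b ∈ S, b.1 Mi ∈ Tset := by
      intro b hb
      obtain ⟨t, ht⟩ := hrep b (hSsub hb) Mi
      rw [hTset, Finset.mem_image]
      exact ⟨t, Finset.mem_univ t, ht.symm⟩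
    have hinj : Set.InjOn (fun b : BLam B L => b.1 Mi) ↑S := by
      intro b hb b' hb' heqv
      by_contra hne
      have hdm' := hdm b b' hne
      have hdvd : (dm b b').1 ∣ M := by
        rw [hMdef]
        exact Finset.dvd_prod_of_mem (fun q => (dm q.1 q.2).1)
          (a := (b, b'))
          (Finset.mem_product.2 ⟨Finset.mem_coe.1 hb, Finset.mem_coe.1 hb'⟩)
      have h1 := b.2 Mi (dm b b') hdvd
      have h2 := b'.2 Mi (dm b b') hdvd
      rw [← h1, ← h2] at hdm'
      exact hdm' (congrArg (transMap B hdvd) heqv)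
    have hcard := Finset.card_le_card_of_injOn (fun b : BLam B L => b.1 Mi) hmaps hinj
    have hTcard : Tset.card ≤ Fintype.card T := by
      rw [hTset]
      exact le_trans (Finset.card_image_le) (le_of_eq (Finset.card_univ))
    omega
  refine ⟨?_, hfin, ⟨N, hNlam, hkill⟩⟩
  -- Part 1 : topological finite generation
  have hmemBLam : ∀ x : B,
      (fun m : {m : ℕ // NLam L m} => (QuotientAddGroup.mk x : B ⧸ smulSub B m.1)) ∈ BLam B L :=
    fun x m m' h => transMap_mk h x
  set η : B →+ BLam B L := AddMonoidHom.codRestrict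
    { toFun := fun x => fun m : {m : ℕ // NLam L m} => (QuotientAddGroup.mk x : B ⧸ smulSub B m.1),
      map_zero' := rfl,
      map_add' := fun a b => rfl } (BLam B L) hmemBLam with hηdef
  have honemem : (fun n : ℕ+ => (1 : ZMod n)) ∈ ZHat := by
    intro m n h
    rw [map_one]
  set oneZ : ZHat := ⟨fun n => (1 : ZMod n), honemem⟩ with honeZ
  have hbv : ∀ i : Fin r, ∃ x : B, π x = Pi.single i oneZ := fun i => hπ _
  choose bvec hbvec using hbv
  -- generation at each finite level
  have hgen : ∀ (M : ℕ), 0 < M → ∀ x : B, ∃ (c : Fin r → ℕ) (t : T) (β : B),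
      x = (∑ i, c i • bvec i) + (ι t + M • β) := by
    intro M hM x
    haveI : NeZero M := ⟨hM.ne'⟩
    set Mp : ℕ+ := ⟨M, hM⟩ with hMp
    set c : Fin r → ℕ := fun i => ((π x i).1 Mp).val with hc
    have hdvd : ∀ i : Fin r, ∃ w ∈ ZHat, (Mp : ℕ) • w = (π x i).1 - c i • oneZ.1 := by
      intro i
      apply zhat_div (sub_mem (π x i).2 (AddSubgroup.nsmul_mem _ oneZ.2 (c i)))
      show (π x i).1 Mp - c i • (1 : ZMod Mp) = 0
      rw [nsmul_eq_mul, mul_one, hc]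
      show (π x i).1 Mp - ((((π x i).1 Mp).val : ℕ) : ZMod Mp) = 0
      rw [ZMod.natCast_val, ZMod.cast_id, sub_self]
    choose w hwmem hws using hdvd
    obtain ⟨v, hv⟩ := hπ (fun i => (⟨w i, hwmem i⟩ : ZHat))
    have hsum : (∑ j, c j • (Pi.single j oneZ : Fin r → ZHat)) = fun i => c i • oneZ := by
      simp only [← Pi.single_smul]
      exact Finset.univ_sum_single _
    have hker : x - ((∑ i, c i • bvec i) + M • v) ∈ π.ker := by
      rw [AddMonoidHom.mem_ker, map_sub, map_add, map_sum, map_nsmul, hv, sub_eq_zero]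
      have : (∑ i, π (c i • bvec i)) = fun i => c i • oneZ := by
        rw [← hsum]
        apply Finset.sum_congr rfl
        intro i _
        rw [map_nsmul, hbvec i]
      rw [this]
      funext i
      show π x i = c i • oneZ + M • (⟨w i, hwmem i⟩ : ZHat)
      apply Subtype.ext
      show (π x i).1 = c i • oneZ.1 + M • w i
      have hwsi : M • w i = (π x i).1 - c i • oneZ.1 := hws i
      rw [hwsi]
      abel
    rw [hex] at hker
    obtain ⟨t, ht⟩ := hker
    refine ⟨c, t, v, ?_⟩
    rw [show ι t + M • v = (x - ((∑ i, c i • bvec i) + M • v)) + M • v from by rw [ht]]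
    abel
  -- the finite generating set
  have hfinS : ((Set.range (fun t : T => η (ι t))) ∪
      (Set.range (fun i : Fin r => η (bvec i)))).Finite :=
    (Set.finite_range _).union (Set.finite_range _)
  refine ⟨hfinS.toFinset, ?_⟩
  rw [dense_iff_inter_open]
  intro U hU hUne
  obtain ⟨V, hV, rfl⟩ := isOpen_induced_iff.1 hU
  obtain ⟨f, hfU⟩ := hUne
  obtain ⟨I, u, hIu, hpi⟩ := isOpen_pi_iff.1 hV f.1 hfU
  set M : ℕ := ∏ i ∈ I, i.1 with hMdef
  have hM : NLam L M := Finset.prod_induction _ (NLam L) (fun a b ha hb => ha.mul' hb)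
    (NLam.one' L) (fun q _ => q.2)
  set Mi : {m : ℕ // NLam L m} := ⟨M, hM⟩ with hMidef
  obtain ⟨x, hx⟩ := QuotientAddGroup.mk_surjective (f.1 Mi)
  obtain ⟨c, t, β, hdec⟩ := hgen M hM.1 x
  set g : BLam B L := (∑ i, c i • η (bvec i)) + η (ι t) with hgdef
  have hgη : g = η ((∑ i, c i • bvec i) + ι t) := by
    rw [hgdef, map_add]
    congr 1
    rw [map_sum]
    exact Finset.sum_congr rfl (fun i _ => (map_nsmul η (c i) (bvec i)).symm)
  have hgM : g.1 Mi = f.1 Mi := by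
    rw [hgη]
    show QuotientAddGroup.mk ((∑ i, c i • bvec i) + ι t) = f.1 Mi
    rw [← hx, QuotientAddGroup.eq_iff_sub_mem]
    rw [show (∑ i, c i • bvec i) + ι t - x = -(M • β) from by rw [hdec]; abel]
    exact AddSubgroup.neg_mem _ (smulSub_mem M β)
  have hgcl : g ∈ AddSubgroup.closure (hfinS.toFinset : Set (BLam B L)) := by
    have hsub : ∀ z ∈ ((Set.range (fun t : T => η (ι t))) ∪
        (Set.range (fun i : Fin r => η (bvec i)))),
        z ∈ AddSubgroup.closure (hfinS.toFinset : Set (BLam B L)) := fun z hz =>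
      AddSubgroup.subset_closure (by rwa [Set.Finite.coe_toFinset])
    refine AddSubgroup.add_mem _ ?_ ?_
    · refine AddSubgroup.sum_mem _ (fun i _ => AddSubgroup.nsmul_mem _ ?_ _)
      exact hsub _ (Or.inr ⟨i, rfl⟩)
    · exact hsub _ (Or.inl ⟨t, rfl⟩)
  refine ⟨g, ?_, hgcl⟩
  show (g : ∀ m : {m : ℕ // NLam L m}, B ⧸ smulSub B m.1) ∈ V
  apply hpi
  rw [Set.mem_pi]
  intro i hi
  have hdvd : i.1 ∣ M := Finset.dvd_prod_of_mem (fun m => m.1) hi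
  have hcomp : g.1 i = f.1 i := by
    rw [← g.2 Mi i hdvd, ← f.2 Mi i hdvd, hgM]
  rw [hcomp]
  exact (hIu i hi).2
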